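/- Suppose f and h both satisfy (G1)–(G3), and fix H with ‖H‖_{2,col} ≤ B. Let Θ = (θ_{l,j}, w_{l,j}) and Θ̃ = (θ̃_{l,j}, w̃_{l,j}) be two parameter configurations of depth L and width M with √(‖θ_{l,j}‖²+‖w_{l,j}‖²) ≤ r and √(‖θ̃_{l,j}‖²+‖w̃_{l,j}‖²) ≤ r for all l, j. Then there is a constant C, depending only on N, D, r, B and the constants in (G1)–(G3), such that at every grid point t ∈ {0, 1/L, …, 1}: ‖T̂_Θ(H,t) − T̂_{Θ̃}(H,t)‖_F ≤ (C/(ML))·∑_{l=0}^{L−1}∑_{j=1}^{M} √(‖θ_{l,j}−θ̃_{l,j}‖² + ‖w_{l,j}−w̃_{l,j}‖²). -/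

import Mathlib

open MeasureTheory Set

noncomputable section

/-- `D × (N+1)` real matrices, with the Frobenius (Euclidean) norm. -/
abbrev Mat (D N : ℕ) : Type := EuclideanSpace ℝ (Fin D × Fin (N + 1))

/-- Parameter space `ℝ^p` with the Euclidean norm. -/
abbrev Par (p : ℕ) : Type := EuclideanSpace ℝ (Fin p)

/-- The `j`-th column of a matrix, as a Euclidean vector. -/
noncomputable def matCol {D N : ℕ} (Z : Mat D N) (j : Fin (N + 1)) :
    EuclideanSpace ℝ (Fin D) :=
  (WithLp.equiv 2 (Fin D → ℝ)).symm fun i => Z (i, j)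

/-- Maximum ℓ²-norm of a column: `‖Z‖_{2,col}`. -/
noncomputable def colNorm {D N : ℕ} (Z : Mat D N) : ℝ :=
  ⨆ j : Fin (N + 1), ‖matCol Z j‖

/-- The discrete Transformer: `T̂(t_{l+1})` is obtained from `T̂(t_l)` by one self-attention
half-step with encoder `f` followed by one feed-forward half-step with encoder `h`,
with step size `Δt/2 = 1/(2L)` and `M` heads. -/
noncomputable def Tdis {D N q : ℕ} (f h : Mat D N → Par q → Mat D N) (L M : ℕ)
    (θ w : ℕ → Fin M → Par q) (H : Mat D N) : ℕ → Mat D N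
  | 0 => H
  | l + 1 =>
    let T := Tdis f h L M θ w H l
    let T' := T + (2 * (L : ℝ) * (M : ℝ))⁻¹ • ∑ j : Fin M, f T (θ l j)
    T' + (2 * (L : ℝ) * (M : ℝ))⁻¹ • ∑ j : Fin M, h T' (w l j)

/-- The discrete Transformer at the half grid point `t_l + Δt/2`. -/
noncomputable def TdisHalf {D N q : ℕ} (f h : Mat D N → Par q → Mat D N) (L M : ℕ)
    (θ w : ℕ → Fin M → Par q) (H : Mat D N) (l : ℕ) : Mat D N :=
  Tdis f h L M θ w H l +
    (2 * (L : ℝ) * (M : ℝ))⁻¹ • ∑ j : Fin M, f (Tdis f h L M θ w H l) (θ l j)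

section Helpers

variable {D N : ℕ}

lemma matCol_apply (Z : Mat D N) (j : Fin (N+1)) (i : Fin D) :
    matCol Z j i = Z (i, j) := rfl

lemma matCol_add (Z W : Mat D N) (j) : matCol (Z + W) j = matCol Z j + matCol W j := by
  ext i; simp [matCol_apply]

lemma matCol_sub (Z W : Mat D N) (j) : matCol (Z - W) j = matCol Z j - matCol W j := by
  ext i; simp [matCol_apply]

lemma matCol_smul (c : ℝ) (Z : Mat D N) (j) : matCol (c • Z) j = c • matCol Z j := by
  ext i; simp [matCol_apply]

/-- `matCol` as a continuous linear map. -/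
def matColL (D N : ℕ) (j : Fin (N+1)) : Mat D N →L[ℝ] EuclideanSpace ℝ (Fin D) :=
  LinearMap.toContinuousLinearMap
    { toFun := fun Z => matCol Z j
      map_add' := fun Z W => matCol_add Z W j
      map_smul' := fun c Z => matCol_smul c Z j }

lemma norm_sq_eq_sum_cols (Z : Mat D N) :
    ‖Z‖ ^ 2 = ∑ j : Fin (N+1), ‖matCol Z j‖ ^ 2 := by
  have h1 : ‖Z‖ ^ 2 = ∑ p : Fin D × Fin (N+1), Z p ^ 2 := by
    rw [EuclideanSpace.norm_eq, Real.sq_sqrt (by positivity)]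
    simp [Real.norm_eq_abs, sq_abs]
  have h2 : ∀ j, ‖matCol Z j‖ ^ 2 = ∑ i : Fin D, Z (i, j) ^ 2 := by
    intro j
    rw [EuclideanSpace.norm_eq, Real.sq_sqrt (by positivity)]
    simp [Real.norm_eq_abs, sq_abs, matCol_apply]
  rw [h1, Fintype.sum_prod_type_right]
  simp [h2]

lemma colNorm_nonneg (Z : Mat D N) : 0 ≤ colNorm Z :=
  le_ciSup_of_le (Finite.bddAbove (Set.finite_range _)) ⟨0, Nat.succ_pos N⟩ (norm_nonneg _)

lemma matCol_le_colNorm (Z : Mat D N) (j) : ‖matCol Z j‖ ≤ colNorm Z :=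
  le_ciSup (f := fun j => ‖matCol Z j‖) (Finite.bddAbove (Set.finite_range _)) j

lemma colNorm_le_norm (Z : Mat D N) : colNorm Z ≤ ‖Z‖ := by
  apply ciSup_le
  intro j
  have := norm_sq_eq_sum_cols Z
  have h : ‖matCol Z j‖ ^ 2 ≤ ‖Z‖ ^ 2 := by
    rw [this]
    exact Finset.single_le_sum (f := fun j => ‖matCol Z j‖^2) (fun _ _ => by positivity) (Finset.mem_univ j)
  nlinarith [norm_nonneg (matCol Z j), norm_nonneg Z]

lemma norm_le_of_cols {c : ℝ} (hc : 0 ≤ c) (Z : Mat D N) (h : ∀ j, ‖matCol Z j‖ ≤ c) :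
    ‖Z‖ ≤ Real.sqrt (N + 1) * c := by
  have h1 : ‖Z‖ ^ 2 ≤ (N + 1) * c ^ 2 := by
    rw [norm_sq_eq_sum_cols]
    calc ∑ j : Fin (N+1), ‖matCol Z j‖ ^ 2 ≤ ∑ _j : Fin (N+1), c ^ 2 :=
          Finset.sum_le_sum fun j _ => pow_le_pow_left₀ (norm_nonneg _) (h j) 2
      _ = (N + 1) * c ^ 2 := by simp [mul_comm]
  have := Real.sqrt_le_sqrt h1
  rwa [Real.sqrt_sq (norm_nonneg _), Real.sqrt_mul (by positivity), Real.sqrt_sq hc] at this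

lemma norm_le_sqrt_colNorm (Z : Mat D N) : ‖Z‖ ≤ Real.sqrt (N + 1) * colNorm Z :=
  norm_le_of_cols (colNorm_nonneg Z) Z (matCol_le_colNorm Z)

lemma colNorm_zero : colNorm (0 : Mat D N) = 0 := by
  have h : ∀ j : Fin (N+1), matCol (0 : Mat D N) j = 0 := by
    intro j; ext i; rfl
  simp [colNorm, h]

/-- parameter-Lipschitz bound from (G2) -/
lemma lipPar {q : ℕ} (g : Mat D N → Par q → Mat D N)
    (hgdiff : Differentiable ℝ fun z : Mat D N × Par q => g z.1 z.2)
    (φP : ℝ → ℝ)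
    (hG2 : ∀ (T : Mat D N) (ϑ : Par q) (i : Fin (N + 1)),
      ‖fderiv ℝ (fun θ' => matCol (g T θ') i) ϑ‖ ≤ φP (colNorm T) * (1 + ‖ϑ‖))
    (T : Mat D N) {r : ℝ} (hr : 0 ≤ r) {θ θ' : Par q} (hθ : ‖θ‖ ≤ r) (hθ' : ‖θ'‖ ≤ r) :
    ‖g T θ - g T θ'‖ ≤ Real.sqrt (N+1) * (φP (colNorm T) * (1 + r)) * ‖θ - θ'‖ := by
  have hφ0 : 0 ≤ φP (colNorm T) := by
    have h := hG2 T 0 ⟨0, Nat.succ_pos N⟩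
    have h0 : (0:ℝ) ≤ φP (colNorm T) * (1 + ‖(0 : Par q)‖) := le_trans (norm_nonneg _) h
    simpa using h0
  have hdiff : ∀ i : Fin (N+1), Differentiable ℝ (fun θ'' => matCol (g T θ'') i) := by
    intro i
    have h1 : Differentiable ℝ (fun θ'' : Par q => g T θ'') :=
      hgdiff.comp ((differentiable_const T).prodMk differentiable_id)
    exact (matColL D N i).differentiable.comp h1
  have key : ∀ i : Fin (N+1),
      ‖matCol (g T θ) i - matCol (g T θ') i‖ ≤ φP (colNorm T) * (1 + r) * ‖θ - θ'‖ := by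
    intro i
    refine (convex_closedBall (0 : Par q) r).norm_image_sub_le_of_norm_fderiv_le
      (fun x _ => (hdiff i).differentiableAt) (fun x hx => ?_)
      (mem_closedBall_zero_iff.2 hθ') (mem_closedBall_zero_iff.2 hθ)
    refine (hG2 T x i).trans ?_
    have hx' : ‖x‖ ≤ r := mem_closedBall_zero_iff.1 hx
    exact mul_le_mul_of_nonneg_left (by linarith) hφ0
  have hc : 0 ≤ φP (colNorm T) * (1 + r) * ‖θ - θ'‖ := by positivity
  have := norm_le_of_cols hc (g T θ - g T θ') (fun i => by
    rw [matCol_sub]; exact key i)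
  linarith [this]

/-- state-Lipschitz bound from (G3) -/
lemma lipT {q : ℕ} (g : Mat D N → Par q → Mat D N)
    (hgdiff : Differentiable ℝ fun z : Mat D N × Par q => g z.1 z.2)
    (φT : ℝ → ℝ) (hmono : Monotone φT)
    (hG3 : ∀ (T : Mat D N) (ϑ : Par q),
      ‖fderiv ℝ (fun T' => g T' ϑ) T‖ ≤ φT ‖T‖ * (1 + ‖ϑ‖ + ‖ϑ‖ ^ 2))
    (ϑ : Par q) {ρ P : ℝ} {T S : Mat D N} (hT : ‖T‖ ≤ ρ) (hS : ‖S‖ ≤ ρ)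
    (hP : 1 + ‖ϑ‖ + ‖ϑ‖ ^ 2 ≤ P) :
    ‖g T ϑ - g S ϑ‖ ≤ φT ρ * P * ‖T - S‖ := by
  have hρ : 0 ≤ ρ := le_trans (norm_nonneg T) hT
  have hq : (0:ℝ) < 1 + ‖ϑ‖ + ‖ϑ‖ ^ 2 := by positivity
  have hφ0 : 0 ≤ φT ρ := by
    have h := hG3 S ϑ
    have h0 : (0:ℝ) ≤ φT ‖S‖ * (1 + ‖ϑ‖ + ‖ϑ‖ ^ 2) := le_trans (norm_nonneg _) h
    have : 0 ≤ φT ‖S‖ := by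
      by_contra hneg
      push_neg at hneg
      nlinarith
    exact le_trans this (hmono hS)
  have hdiff : Differentiable ℝ (fun T' : Mat D N => g T' ϑ) :=
    hgdiff.comp (differentiable_id.prodMk (differentiable_const ϑ))
  refine (convex_closedBall (0 : Mat D N) ρ).norm_image_sub_le_of_norm_fderiv_le
    (fun x _ => hdiff.differentiableAt) (fun x hx => ?_)
    (mem_closedBall_zero_iff.2 hS) (mem_closedBall_zero_iff.2 hT)
  refine (hG3 x ϑ).trans ?_
  have hx' : ‖x‖ ≤ ρ := mem_closedBall_zero_iff.1 hx
  have h1 : φT ‖x‖ ≤ φT ρ := hmono hx'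
  have h2 : 0 ≤ φT ‖x‖ := by
    have h := le_trans (norm_nonneg (fderiv ℝ (fun T' => g T' ϑ) x)) (hG3 x ϑ)
    by_contra hneg
    push_neg at hneg
    nlinarith
  exact mul_le_mul h1 hP hq.le hφ0

/-- Frobenius version of (G1). -/
lemma normG1 {q : ℕ} (g : Mat D N → Par q → Mat D N) {K : ℝ} (hK : 0 ≤ K)
    (hG1 : ∀ (T : Mat D N) (ϑ : Par q),
      colNorm (g T ϑ) ≤ K * colNorm T * (1 + ‖ϑ‖ + ‖ϑ‖ ^ 2))
    (T : Mat D N) (ϑ : Par q) {P : ℝ} (hP : 1 + ‖ϑ‖ + ‖ϑ‖ ^ 2 ≤ P) :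
    ‖g T ϑ‖ ≤ Real.sqrt (N+1) * (K * P) * ‖T‖ := by
  have hq : (0:ℝ) < 1 + ‖ϑ‖ + ‖ϑ‖ ^ 2 := by positivity
  have hP0 : 0 ≤ P := le_trans hq.le hP
  have hc : 0 ≤ K * P * ‖T‖ := by positivity
  have hcol : ∀ i, ‖matCol (g T ϑ) i‖ ≤ K * P * ‖T‖ := by
    intro i
    refine (matCol_le_colNorm _ i).trans ((hG1 T ϑ).trans ?_)
    have h1 : K * colNorm T ≤ K * ‖T‖ := mul_le_mul_of_nonneg_left (colNorm_le_norm T) hK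
    have h2 : K * colNorm T * (1 + ‖ϑ‖ + ‖ϑ‖ ^ 2) ≤ K * ‖T‖ * P := by
      refine mul_le_mul h1 hP hq.le ?_
      positivity
    linarith [h2]
  have := norm_le_of_cols hc (g T ϑ) hcol
  linarith [this]

lemma step_norm {E : Type*} [NormedAddCommGroup E] [NormedSpace ℝ E] {M : ℕ}
    {δ c : ℝ} (hδ : 0 ≤ δ) (X : E) (G : Fin M → E) (hG : ∀ j, ‖G j‖ ≤ c) :
    ‖X + δ • ∑ j, G j‖ ≤ ‖X‖ + δ * M * c := by
  have h1 : ‖∑ j, G j‖ ≤ (M : ℝ) * c := by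
    refine (norm_sum_le _ _).trans ?_
    calc ∑ j : Fin M, ‖G j‖ ≤ ∑ _j : Fin M, c := Finset.sum_le_sum fun j _ => hG j
      _ = (M : ℝ) * c := by simp [mul_comm]
  calc ‖X + δ • ∑ j, G j‖ ≤ ‖X‖ + ‖δ • ∑ j, G j‖ := norm_add_le _ _
    _ = ‖X‖ + δ * ‖∑ j, G j‖ := by rw [norm_smul, Real.norm_of_nonneg hδ]
    _ ≤ ‖X‖ + δ * ((M : ℝ) * c) := by nlinarith
    _ = ‖X‖ + δ * M * c := by ring

lemma step_diff {E : Type*} [NormedAddCommGroup E] [NormedSpace ℝ E] {M : ℕ}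
    {δ : ℝ} (hδ : 0 ≤ δ) (X Y : E) (G G' : Fin M → E) :
    ‖(X + δ • ∑ j, G j) - (Y + δ • ∑ j, G' j)‖ ≤ ‖X - Y‖ + δ * ∑ j, ‖G j - G' j‖ := by
  have heq : (X + δ • ∑ j, G j) - (Y + δ • ∑ j, G' j)
      = (X - Y) + δ • ∑ j, (G j - G' j) := by
    rw [Finset.sum_sub_distrib, smul_sub]; abel
  rw [heq]
  refine (norm_add_le _ _).trans (add_le_add_right ?_ _)
  rw [norm_smul, Real.norm_of_nonneg hδ]
  exact mul_le_mul_of_nonneg_left (norm_sum_le _ _) hδ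

lemma le_sqrt_add_sq_left {a b : ℝ} (ha : 0 ≤ a) : a ≤ Real.sqrt (a^2 + b^2) := by
  calc a = Real.sqrt (a^2) := (Real.sqrt_sq ha).symm
    _ ≤ Real.sqrt (a^2 + b^2) := Real.sqrt_le_sqrt (by nlinarith [sq_nonneg b])

lemma add_le_two_sqrt {a b : ℝ} (ha : 0 ≤ a) (hb : 0 ≤ b) :
    a + b ≤ 2 * Real.sqrt (a^2 + b^2) := by
  have h1 := le_sqrt_add_sq_left (b := b) ha
  have h2 := le_sqrt_add_sq_left (b := a) hb
  rw [add_comm (b^2)] at h2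
  linarith

lemma Tdis_succ {D N q : ℕ} (f h : Mat D N → Par q → Mat D N) (L M : ℕ)
    (θ w : ℕ → Fin M → Par q) (H : Mat D N) (l : ℕ) :
    Tdis f h L M θ w H (l+1) =
      (Tdis f h L M θ w H l
        + (2 * (L : ℝ) * (M : ℝ))⁻¹ • ∑ j : Fin M, f (Tdis f h L M θ w H l) (θ l j))
      + (2 * (L : ℝ) * (M : ℝ))⁻¹ • ∑ j : Fin M,
          h (Tdis f h L M θ w H l
            + (2 * (L : ℝ) * (M : ℝ))⁻¹ • ∑ j : Fin M, f (Tdis f h L M θ w H l) (θ l j))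
            (w l j) := rfl

end Helpers

set_option maxHeartbeats 1000000 in
/-- discrete Transformer difference bound in terms of the total parameter
distance. -/
theorem stmt7 (D N q : ℕ) (f h : Mat D N → Par q → Mat D N)
    (B K r : ℝ) (φP φT : ℝ → ℝ)
    (hB : 0 < B) (hK : 0 < K) (hr : 0 < r)
    (hφP : Continuous φP ∧ Monotone φP) (hφT : Continuous φT ∧ Monotone φT)
    (hfdiff : Differentiable ℝ fun z : Mat D N × Par q => f z.1 z.2)
    (hhdiff : Differentiable ℝ fun z : Mat D N × Par q => h z.1 z.2)
    (hG1f : ∀ (T : Mat D N) (θ : Par q),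
      colNorm (f T θ) ≤ K * colNorm T * (1 + ‖θ‖ + ‖θ‖ ^ 2))
    (hG2f : ∀ (T : Mat D N) (θ : Par q) (i : Fin (N + 1)),
      ‖fderiv ℝ (fun θ' => matCol (f T θ') i) θ‖ ≤ φP (colNorm T) * (1 + ‖θ‖))
    (hG3f : ∀ (T : Mat D N) (θ : Par q),
      ‖fderiv ℝ (fun T' => f T' θ) T‖ ≤ φT ‖T‖ * (1 + ‖θ‖ + ‖θ‖ ^ 2))
    (hG1h : ∀ (T : Mat D N) (w : Par q),
      colNorm (h T w) ≤ K * colNorm T * (1 + ‖w‖ + ‖w‖ ^ 2))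
    (hG2h : ∀ (T : Mat D N) (w : Par q) (i : Fin (N + 1)),
      ‖fderiv ℝ (fun w' => matCol (h T w') i) w‖ ≤ φP (colNorm T) * (1 + ‖w‖))
    (hG3h : ∀ (T : Mat D N) (w : Par q),
      ‖fderiv ℝ (fun T' => h T' w) T‖ ≤ φT ‖T‖ * (1 + ‖w‖ + ‖w‖ ^ 2)) :
    ∃ C : ℝ, 0 < C ∧ ∀ (L M : ℕ), 0 < L → 0 < M →
      ∀ θ w θ' w' : ℕ → Fin M → Par q,
        (∀ l < L, ∀ j : Fin M, Real.sqrt (‖θ l j‖ ^ 2 + ‖w l j‖ ^ 2) ≤ r) →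
        (∀ l < L, ∀ j : Fin M, Real.sqrt (‖θ' l j‖ ^ 2 + ‖w' l j‖ ^ 2) ≤ r) →
        ∀ H : Mat D N, colNorm H ≤ B →
          ∀ l ≤ L,
            ‖Tdis f h L M θ w H l - Tdis f h L M θ' w' H l‖ ≤
              C / ((M : ℝ) * L) * ∑ l' ∈ Finset.range L, ∑ j : Fin M,
                Real.sqrt (‖θ l' j - θ' l' j‖ ^ 2 + ‖w l' j - w' l' j‖ ^ 2) := by
  obtain ⟨hφPc, hφPm⟩ := hφP
  obtain ⟨hφTc, hφTm⟩ := hφT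
  have hφPnn : ∀ x : ℝ, 0 ≤ x → 0 ≤ φP x := by
    intro x hx
    have h0 : (0:ℝ) ≤ φP (colNorm (0 : Mat D N)) * (1 + ‖(0 : Par q)‖) :=
      le_trans (norm_nonneg _) (hG2f 0 0 ⟨0, Nat.succ_pos N⟩)
    rw [colNorm_zero] at h0
    simp only [norm_zero, add_zero, mul_one] at h0
    exact le_trans h0 (hφPm hx)
  have hφTnn : ∀ x : ℝ, 0 ≤ x → 0 ≤ φT x := by
    intro x hx
    have h0 : (0:ℝ) ≤ φT ‖(0 : Mat D N)‖ * (1 + ‖(0 : Par q)‖ + ‖(0 : Par q)‖ ^ 2) :=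
      le_trans (norm_nonneg _) (hG3f 0 0)
    rw [norm_zero] at h0
    simp only [norm_zero, add_zero, zero_pow, mul_one, ne_eq, OfNat.ofNat_ne_zero,
      not_false_eq_true] at h0
    exact le_trans h0 (hφTm hx)
  set P : ℝ := 1 + r + r ^ 2 with hPdef
  have hP0 : 0 < P := by rw [hPdef]; nlinarith
  have hP1 : ∀ x : Par q, ‖x‖ ≤ r → 1 + ‖x‖ + ‖x‖ ^ 2 ≤ P := by
    intro x hx; rw [hPdef]; nlinarith [norm_nonneg x]
  set K₁ : ℝ := Real.sqrt (N + 1) * (K * P) with hK₁def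
  have hK₁0 : 0 ≤ K₁ := by rw [hK₁def]; positivity
  set R : ℝ := Real.sqrt (N + 1) * B * Real.exp K₁ with hRdef
  have hR0 : 0 ≤ R := by rw [hRdef]; positivity
  set A : ℝ := φT R * P with hAdef
  have hA0 : 0 ≤ A := mul_nonneg (hφTnn R hR0) hP0.le
  set Lp : ℝ := Real.sqrt (N + 1) * (φP R * (1 + r)) with hLpdef
  have hLp0 : 0 ≤ Lp := by
    rw [hLpdef]
    have := hφPnn R hR0
    positivity
  refine ⟨Real.exp A * Lp + 1, by positivity, ?_⟩
  intro L M hL hM θ w θ' w' hΘ hΘ' H hH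
  have hLr : (0:ℝ) < L := by exact_mod_cast hL
  have hMr : (0:ℝ) < M := by exact_mod_cast hM
  set δ : ℝ := (2 * (L:ℝ) * (M:ℝ))⁻¹ with hδdef
  have hδ0 : 0 ≤ δ := by rw [hδdef]; positivity
  have hδM : δ * (M:ℝ) = (2 * (L:ℝ))⁻¹ := by
    rw [hδdef]; field_simp
  -- parameter norm bounds
  have hθr : ∀ l < L, ∀ j, ‖θ l j‖ ≤ r := fun l hl j =>
    le_trans (le_sqrt_add_sq_left (norm_nonneg _)) (hΘ l hl j)
  have hwr : ∀ l < L, ∀ j, ‖w l j‖ ≤ r := by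
    intro l hl j
    have h1 : ‖w l j‖ ≤ Real.sqrt (‖w l j‖ ^ 2 + ‖θ l j‖ ^ 2) :=
      le_sqrt_add_sq_left (norm_nonneg _)
    rw [add_comm] at h1
    exact le_trans h1 (hΘ l hl j)
  have hθ'r : ∀ l < L, ∀ j, ‖θ' l j‖ ≤ r := fun l hl j =>
    le_trans (le_sqrt_add_sq_left (norm_nonneg _)) (hΘ' l hl j)
  have hw'r : ∀ l < L, ∀ j, ‖w' l j‖ ≤ r := by
    intro l hl j
    have h1 : ‖w' l j‖ ≤ Real.sqrt (‖w' l j‖ ^ 2 + ‖θ' l j‖ ^ 2) :=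
      le_sqrt_add_sq_left (norm_nonneg _)
    rw [add_comm] at h1
    exact le_trans h1 (hΘ' l hl j)
  -- Frobenius (G1)
  have hfK : ∀ (T : Mat D N) (ϑ : Par q), ‖ϑ‖ ≤ r → ‖f T ϑ‖ ≤ K₁ * ‖T‖ := by
    intro T ϑ hϑ
    rw [hK₁def]
    exact normG1 f hK.le hG1f T ϑ (hP1 ϑ hϑ)
  have hhK : ∀ (T : Mat D N) (ϑ : Par q), ‖ϑ‖ ≤ r → ‖h T ϑ‖ ≤ K₁ * ‖T‖ := by
    intro T ϑ hϑ
    rw [hK₁def]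
    exact normG1 h hK.le hG1h T ϑ (hP1 ϑ hϑ)
  set b : ℝ := 1 + K₁ / (2 * (L:ℝ)) with hbdef
  have hb1 : 1 ≤ b := by
    rw [hbdef]
    have : 0 ≤ K₁ / (2 * (L:ℝ)) := by positivity
    linarith
  have hb0 : 0 ≤ b := by linarith
  -- generic exponential bound
  have hpow : ∀ a : ℝ, 0 ≤ a → ∀ k : ℕ, k ≤ 2 * L →
      (1 + a / (2 * (L:ℝ))) ^ k ≤ Real.exp a := by
    intro a ha k hk
    have h2L : (0:ℝ) < 2 * (L:ℝ) := by positivity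
    have h1 : 1 + a / (2 * (L:ℝ)) ≤ Real.exp (a / (2 * (L:ℝ))) := by
      have := Real.add_one_le_exp (a / (2 * (L:ℝ))); linarith
    have h2 : (1 + a / (2 * (L:ℝ))) ^ k ≤ Real.exp (a / (2 * (L:ℝ))) ^ k :=
      pow_le_pow_left₀ (by positivity) h1 k
    rw [← Real.exp_nat_mul] at h2
    refine h2.trans (Real.exp_le_exp.2 ?_)
    have hkc : (k:ℝ) ≤ 2 * (L:ℝ) := by exact_mod_cast hk
    have heq : (k:ℝ) * (a / (2 * (L:ℝ))) = a * ((k:ℝ) / (2 * (L:ℝ))) := by ring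
    rw [heq]
    have hfrac : (k:ℝ) / (2 * (L:ℝ)) ≤ 1 := by rw [div_le_one h2L]; exact hkc
    nlinarith [div_nonneg (Nat.cast_nonneg k) h2L.le]
  set sB : ℝ := Real.sqrt (N + 1) * B with hsBdef
  have hsB0 : 0 ≤ sB := by rw [hsBdef]; positivity
  have hHn : ‖H‖ ≤ sB := by
    refine (norm_le_sqrt_colNorm H).trans ?_
    rw [hsBdef]
    exact mul_le_mul_of_nonneg_left hH (Real.sqrt_nonneg _)
  have hsBR : ∀ k : ℕ, k ≤ 2 * L → sB * b ^ k ≤ R := by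
    intro k hk
    have h1 : b ^ k ≤ Real.exp K₁ := by rw [hbdef]; exact hpow K₁ hK₁0 k hk
    calc sB * b ^ k ≤ sB * Real.exp K₁ := mul_le_mul_of_nonneg_left h1 hsB0
      _ = R := by rw [hsBdef, hRdef]
  -- one half-step norm growth
  have gnorm : ∀ (g : Mat D N → Par q → Mat D N),
      (∀ (T : Mat D N) (ϑ : Par q), ‖ϑ‖ ≤ r → ‖g T ϑ‖ ≤ K₁ * ‖T‖) →
      ∀ (X : Mat D N) (p : Fin M → Par q), (∀ j, ‖p j‖ ≤ r) →
      ‖X + δ • ∑ j : Fin M, g X (p j)‖ ≤ b * ‖X‖ := by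
    intro g hgK X p hp
    have h1 := step_norm hδ0 X (fun j => g X (p j)) (fun j => hgK X (p j) (hp j))
    calc ‖X + δ • ∑ j : Fin M, g X (p j)‖ ≤ ‖X‖ + δ * M * (K₁ * ‖X‖) := h1
      _ = (1 + δ * (M:ℝ) * K₁) * ‖X‖ := by ring
      _ = b * ‖X‖ := by rw [hδM, hbdef]; ring
  -- a priori bound
  have apri : ∀ (ϑ ω : ℕ → Fin M → Par q),
      (∀ l < L, ∀ j, ‖ϑ l j‖ ≤ r) → (∀ l < L, ∀ j, ‖ω l j‖ ≤ r) →
      ∀ n, n ≤ L → ‖Tdis f h L M ϑ ω H n‖ ≤ sB * b ^ (2 * n) := by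
    intro ϑ ω hϑ hω n
    induction n with
    | zero => intro _; simpa [Tdis] using hHn
    | succ n ih =>
      intro hn
      have hnL : n < L := hn
      have hTn := ih (Nat.le_of_lt hnL)
      rw [Tdis_succ, ← hδdef]
      have h1 : ‖Tdis f h L M ϑ ω H n + δ • ∑ j : Fin M, f (Tdis f h L M ϑ ω H n) (ϑ n j)‖
          ≤ b * ‖Tdis f h L M ϑ ω H n‖ :=
        gnorm f hfK (Tdis f h L M ϑ ω H n) (ϑ n) (fun j => hϑ n hnL j)
      have h2 := gnorm h hhK
        (Tdis f h L M ϑ ω H n + δ • ∑ j : Fin M, f (Tdis f h L M ϑ ω H n) (ϑ n j))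
        (ω n) (fun j => hω n hnL j)
      refine (h2.trans (mul_le_mul_of_nonneg_left h1 hb0)).trans ?_
      calc b * (b * ‖Tdis f h L M ϑ ω H n‖) ≤ b * (b * (sB * b ^ (2 * n))) := by
            nlinarith [mul_nonneg hb0 hb0, hTn]
        _ = sB * b ^ (2 * n + 2) := by rw [pow_add]; ring
        _ = sB * b ^ (2 * (n + 1)) := by rw [show 2 * (n + 1) = 2 * n + 2 from by ring]
  -- one half-step difference bound
  have gstep : ∀ (g : Mat D N → Par q → Mat D N),
      (Differentiable ℝ fun z : Mat D N × Par q => g z.1 z.2) →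
      (∀ (T : Mat D N) (ϑ : Par q) (i : Fin (N + 1)),
        ‖fderiv ℝ (fun θ'' => matCol (g T θ'') i) ϑ‖ ≤ φP (colNorm T) * (1 + ‖ϑ‖)) →
      (∀ (T : Mat D N) (ϑ : Par q),
        ‖fderiv ℝ (fun T' => g T' ϑ) T‖ ≤ φT ‖T‖ * (1 + ‖ϑ‖ + ‖ϑ‖ ^ 2)) →
      ∀ (X Y : Mat D N), ‖X‖ ≤ R → ‖Y‖ ≤ R →
      ∀ (p p' : Fin M → Par q), (∀ j, ‖p j‖ ≤ r) → (∀ j, ‖p' j‖ ≤ r) →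
      ‖(X + δ • ∑ j : Fin M, g X (p j)) - (Y + δ • ∑ j : Fin M, g Y (p' j))‖ ≤
        (1 + A / (2 * (L:ℝ))) * ‖X - Y‖ + δ * Lp * ∑ j : Fin M, ‖p j - p' j‖ := by
    intro g hgd hg2 hg3 X Y hX hY p p' hp hp'
    have h0 := step_diff hδ0 X Y (fun j => g X (p j)) (fun j => g Y (p' j))
    have hj : ∀ j, ‖g X (p j) - g Y (p' j)‖ ≤ A * ‖X - Y‖ + Lp * ‖p j - p' j‖ := by
      intro j
      have h1 : ‖g X (p j) - g Y (p j)‖ ≤ A * ‖X - Y‖ := by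
        rw [hAdef]
        exact lipT g hgd φT hφTm hg3 (p j) hX hY (hP1 _ (hp j))
      have h2 : ‖g Y (p j) - g Y (p' j)‖ ≤ Lp * ‖p j - p' j‖ := by
        refine (lipPar g hgd φP hg2 Y hr.le (hp j) (hp' j)).trans ?_
        rw [hLpdef]
        have hm : φP (colNorm Y) ≤ φP R := hφPm ((colNorm_le_norm Y).trans hY)
        have hcn : 0 ≤ φP (colNorm Y) := hφPnn _ (colNorm_nonneg Y)
        have hsq : (0:ℝ) ≤ Real.sqrt ((N:ℝ) + 1) := Real.sqrt_nonneg _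
        have h1r : (0:ℝ) ≤ 1 + r := by linarith
        nlinarith [mul_nonneg (mul_nonneg hsq h1r) (norm_nonneg (p j - p' j))]
      calc ‖g X (p j) - g Y (p' j)‖
          ≤ ‖g X (p j) - g Y (p j)‖ + ‖g Y (p j) - g Y (p' j)‖ := by
            simpa [dist_eq_norm] using dist_triangle (g X (p j)) (g Y (p j)) (g Y (p' j))
        _ ≤ A * ‖X - Y‖ + Lp * ‖p j - p' j‖ := add_le_add h1 h2
    have hsum : ∑ j : Fin M, ‖g X (p j) - g Y (p' j)‖
        ≤ (M:ℝ) * (A * ‖X - Y‖) + Lp * ∑ j : Fin M, ‖p j - p' j‖ := by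
      calc ∑ j : Fin M, ‖g X (p j) - g Y (p' j)‖
          ≤ ∑ j : Fin M, (A * ‖X - Y‖ + Lp * ‖p j - p' j‖) :=
            Finset.sum_le_sum fun j _ => hj j
        _ = (M:ℝ) * (A * ‖X - Y‖) + Lp * ∑ j : Fin M, ‖p j - p' j‖ := by
            rw [Finset.sum_add_distrib, Finset.sum_const, ← Finset.mul_sum]
            simp [Finset.card_univ, nsmul_eq_mul]
    have h4 : δ * ∑ j : Fin M, ‖g X (p j) - g Y (p' j)‖
        ≤ δ * ((M:ℝ) * (A * ‖X - Y‖) + Lp * ∑ j : Fin M, ‖p j - p' j‖) :=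
      mul_le_mul_of_nonneg_left hsum hδ0
    have h5 : δ * ((M:ℝ) * (A * ‖X - Y‖) + Lp * ∑ j : Fin M, ‖p j - p' j‖)
        = A / (2 * (L:ℝ)) * ‖X - Y‖ + δ * Lp * ∑ j : Fin M, ‖p j - p' j‖ := by
      have heq : δ * ((M:ℝ) * (A * ‖X - Y‖) + Lp * ∑ j : Fin M, ‖p j - p' j‖)
          = (δ * (M:ℝ)) * (A * ‖X - Y‖) + δ * Lp * ∑ j : Fin M, ‖p j - p' j‖ := by ring
      rw [heq, hδM]
      ring
    refine h0.trans ?_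
    rw [h5] at h4
    calc ‖X - Y‖ + δ * ∑ j : Fin M, ‖g X (p j) - g Y (p' j)‖
        ≤ ‖X - Y‖ + (A / (2 * (L:ℝ)) * ‖X - Y‖ + δ * Lp * ∑ j : Fin M, ‖p j - p' j‖) := by
          linarith
      _ = (1 + A / (2 * (L:ℝ))) * ‖X - Y‖ + δ * Lp * ∑ j : Fin M, ‖p j - p' j‖ := by ring
  set b' : ℝ := 1 + A / (2 * (L:ℝ)) with hb'def
  have hb'1 : 1 ≤ b' := by
    rw [hb'def]
    have : 0 ≤ A / (2 * (L:ℝ)) := by positivity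
    linarith
  have hb'0 : 0 ≤ b' := by linarith
  have hc0 : ∀ n : ℕ,
      0 ≤ δ * Lp * (∑ j : Fin M, ‖θ n j - θ' n j‖ + ∑ j : Fin M, ‖w n j - w' n j‖) := by
    intro n
    have h1 : 0 ≤ ∑ j : Fin M, ‖θ n j - θ' n j‖ := Finset.sum_nonneg fun j _ => norm_nonneg _
    have h2 : 0 ≤ ∑ j : Fin M, ‖w n j - w' n j‖ := Finset.sum_nonneg fun j _ => norm_nonneg _
    exact mul_nonneg (mul_nonneg hδ0 hLp0) (by linarith)
  -- main difference recursion
  have main : ∀ n ≤ L,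
      ‖Tdis f h L M θ w H n - Tdis f h L M θ' w' H n‖ ≤
        b' ^ (2 * n) * ∑ l' ∈ Finset.range n,
          δ * Lp * (∑ j : Fin M, ‖θ l' j - θ' l' j‖ + ∑ j : Fin M, ‖w l' j - w' l' j‖) := by
    intro n
    induction n with
    | zero => intro _; simp [Tdis]
    | succ n ih =>
      intro hn
      have hnL : n < L := hn
      have ihn := ih (Nat.le_of_lt hnL)
      rw [Tdis_succ, Tdis_succ, ← hδdef]
      have hTnR : ‖Tdis f h L M θ w H n‖ ≤ R :=
        (apri θ w hθr hwr n (Nat.le_of_lt hnL)).trans (hsBR (2 * n) (by omega))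
      have hTn'R : ‖Tdis f h L M θ' w' H n‖ ≤ R :=
        (apri θ' w' hθ'r hw'r n (Nat.le_of_lt hnL)).trans (hsBR (2 * n) (by omega))
      have hHalfR : ‖Tdis f h L M θ w H n
          + δ • ∑ j : Fin M, f (Tdis f h L M θ w H n) (θ n j)‖ ≤ R := by
        refine (gnorm f hfK (Tdis f h L M θ w H n) (θ n) (fun j => hθr n hnL j)).trans ?_
        calc b * ‖Tdis f h L M θ w H n‖ ≤ b * (sB * b ^ (2 * n)) :=
              mul_le_mul_of_nonneg_left (apri θ w hθr hwr n (Nat.le_of_lt hnL)) hb0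
          _ = sB * b ^ (2 * n + 1) := by rw [pow_add]; ring
          _ ≤ R := hsBR (2 * n + 1) (by omega)
      have hHalf'R : ‖Tdis f h L M θ' w' H n
          + δ • ∑ j : Fin M, f (Tdis f h L M θ' w' H n) (θ' n j)‖ ≤ R := by
        refine (gnorm f hfK (Tdis f h L M θ' w' H n) (θ' n) (fun j => hθ'r n hnL j)).trans ?_
        calc b * ‖Tdis f h L M θ' w' H n‖ ≤ b * (sB * b ^ (2 * n)) :=
              mul_le_mul_of_nonneg_left (apri θ' w' hθ'r hw'r n (Nat.le_of_lt hnL)) hb0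
          _ = sB * b ^ (2 * n + 1) := by rw [pow_add]; ring
          _ ≤ R := hsBR (2 * n + 1) (by omega)
      have h1 := gstep f hfdiff hG2f hG3f (Tdis f h L M θ w H n) (Tdis f h L M θ' w' H n)
        hTnR hTn'R (θ n) (θ' n) (fun j => hθr n hnL j) (fun j => hθ'r n hnL j)
      have h2 := gstep h hhdiff hG2h hG3h
        (Tdis f h L M θ w H n + δ • ∑ j : Fin M, f (Tdis f h L M θ w H n) (θ n j))
        (Tdis f h L M θ' w' H n + δ • ∑ j : Fin M, f (Tdis f h L M θ' w' H n) (θ' n j))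
        hHalfR hHalf'R (w n) (w' n) (fun j => hwr n hnL j) (fun j => hw'r n hnL j)
      have h3 := h2.trans (add_le_add_left (mul_le_mul_of_nonneg_left h1 hb'0) _)
      refine h3.trans ?_
      rw [Finset.sum_range_succ, show 2 * (n + 1) = 2 * n + 2 from by ring]
      have hpowe : b' ^ (2 * n + 2) = b' ^ (2 * n) * b' ^ 2 := pow_add b' (2 * n) 2
      have hble : b' ≤ b' ^ (2 * n + 2) := by
        calc b' = b' ^ 1 := (pow_one b').symm
          _ ≤ b' ^ (2 * n + 2) := pow_le_pow_right₀ hb'1 (by omega)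
      have h1le : (1:ℝ) ≤ b' ^ (2 * n + 2) := one_le_pow₀ hb'1
      have hSg0 : 0 ≤ ∑ l' ∈ Finset.range n,
          δ * Lp * (∑ j : Fin M, ‖θ l' j - θ' l' j‖ + ∑ j : Fin M, ‖w l' j - w' l' j‖) :=
        Finset.sum_nonneg fun l' _ => hc0 l'
      have hSθ0 : 0 ≤ δ * Lp * ∑ j : Fin M, ‖θ n j - θ' n j‖ :=
        mul_nonneg (mul_nonneg hδ0 hLp0) (Finset.sum_nonneg fun j _ => norm_nonneg _)
      have hSw0 : 0 ≤ δ * Lp * ∑ j : Fin M, ‖w n j - w' n j‖ :=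
        mul_nonneg (mul_nonneg hδ0 hLp0) (Finset.sum_nonneg fun j _ => norm_nonneg _)
      have hee : b' * (b' * ‖Tdis f h L M θ w H n - Tdis f h L M θ' w' H n‖)
          ≤ b' ^ (2 * n + 2) * ∑ l' ∈ Finset.range n,
            δ * Lp * (∑ j : Fin M, ‖θ l' j - θ' l' j‖ + ∑ j : Fin M, ‖w l' j - w' l' j‖) := by
        calc b' * (b' * ‖Tdis f h L M θ w H n - Tdis f h L M θ' w' H n‖)
            = b' ^ 2 * ‖Tdis f h L M θ w H n - Tdis f h L M θ' w' H n‖ := by ring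
          _ ≤ b' ^ 2 * (b' ^ (2 * n) * ∑ l' ∈ Finset.range n,
              δ * Lp * (∑ j : Fin M, ‖θ l' j - θ' l' j‖ + ∑ j : Fin M, ‖w l' j - w' l' j‖)) :=
            mul_le_mul_of_nonneg_left ihn (by positivity)
          _ = _ := by rw [hpowe]; ring
      have hdθ : b' * (δ * Lp * ∑ j : Fin M, ‖θ n j - θ' n j‖)
          ≤ b' ^ (2 * n + 2) * (δ * Lp * ∑ j : Fin M, ‖θ n j - θ' n j‖) :=
        mul_le_mul_of_nonneg_right hble hSθ0
      have hdw : δ * Lp * ∑ j : Fin M, ‖w n j - w' n j‖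
          ≤ b' ^ (2 * n + 2) * (δ * Lp * ∑ j : Fin M, ‖w n j - w' n j‖) :=
        le_mul_of_one_le_left hSw0 h1le
      nlinarith [hee, hdθ, hdw]
  -- conclusion
  intro l hl
  have hm := main l hl
  have hS0 : 0 ≤ ∑ l' ∈ Finset.range L, ∑ j : Fin M,
      Real.sqrt (‖θ l' j - θ' l' j‖ ^ 2 + ‖w l' j - w' l' j‖ ^ 2) :=
    Finset.sum_nonneg fun l' _ => Finset.sum_nonneg fun j _ => Real.sqrt_nonneg _
  have hb'pow : b' ^ (2 * l) ≤ Real.exp A := by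
    rw [hb'def]; exact hpow A hA0 (2 * l) (by omega)
  have hSgl0 : 0 ≤ ∑ l' ∈ Finset.range l,
      δ * Lp * (∑ j : Fin M, ‖θ l' j - θ' l' j‖ + ∑ j : Fin M, ‖w l' j - w' l' j‖) :=
    Finset.sum_nonneg fun l' _ => hc0 l'
  have hsub : ∑ l' ∈ Finset.range l,
        δ * Lp * (∑ j : Fin M, ‖θ l' j - θ' l' j‖ + ∑ j : Fin M, ‖w l' j - w' l' j‖)
      ≤ ∑ l' ∈ Finset.range L,
        δ * Lp * (∑ j : Fin M, ‖θ l' j - θ' l' j‖ + ∑ j : Fin M, ‖w l' j - w' l' j‖) :=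
    Finset.sum_le_sum_of_subset_of_nonneg (Finset.range_subset_range.2 hl) fun i _ _ => hc0 i
  have hstep2 : ∑ l' ∈ Finset.range L,
        δ * Lp * (∑ j : Fin M, ‖θ l' j - θ' l' j‖ + ∑ j : Fin M, ‖w l' j - w' l' j‖)
      ≤ δ * Lp * (2 * ∑ l' ∈ Finset.range L, ∑ j : Fin M,
        Real.sqrt (‖θ l' j - θ' l' j‖ ^ 2 + ‖w l' j - w' l' j‖ ^ 2)) := by
    rw [← Finset.mul_sum]
    refine mul_le_mul_of_nonneg_left ?_ (mul_nonneg hδ0 hLp0)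
    rw [Finset.mul_sum]
    refine Finset.sum_le_sum fun l' _ => ?_
    rw [← Finset.sum_add_distrib, Finset.mul_sum]
    exact Finset.sum_le_sum fun j _ => add_le_two_sqrt (norm_nonneg _) (norm_nonneg _)
  have hML : (0:ℝ) < (M:ℝ) * (L:ℝ) := by positivity
  have heq : Real.exp A * (δ * Lp * (2 * ∑ l' ∈ Finset.range L, ∑ j : Fin M,
        Real.sqrt (‖θ l' j - θ' l' j‖ ^ 2 + ‖w l' j - w' l' j‖ ^ 2)))
      = (Real.exp A * Lp) / ((M:ℝ) * (L:ℝ)) * ∑ l' ∈ Finset.range L, ∑ j : Fin M,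
        Real.sqrt (‖θ l' j - θ' l' j‖ ^ 2 + ‖w l' j - w' l' j‖ ^ 2) := by
    rw [hδdef]
    field_simp
  calc ‖Tdis f h L M θ w H l - Tdis f h L M θ' w' H l‖
      ≤ b' ^ (2 * l) * ∑ l' ∈ Finset.range l,
          δ * Lp * (∑ j : Fin M, ‖θ l' j - θ' l' j‖ + ∑ j : Fin M, ‖w l' j - w' l' j‖) := hm
    _ ≤ Real.exp A * ∑ l' ∈ Finset.range L,
          δ * Lp * (∑ j : Fin M, ‖θ l' j - θ' l' j‖ + ∑ j : Fin M, ‖w l' j - w' l' j‖) :=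
        mul_le_mul hb'pow hsub hSgl0 (Real.exp_pos A).le
    _ ≤ Real.exp A * (δ * Lp * (2 * ∑ l' ∈ Finset.range L, ∑ j : Fin M,
          Real.sqrt (‖θ l' j - θ' l' j‖ ^ 2 + ‖w l' j - w' l' j‖ ^ 2))) :=
        mul_le_mul_of_nonneg_left hstep2 (Real.exp_pos A).le
    _ = (Real.exp A * Lp) / ((M:ℝ) * (L:ℝ)) * ∑ l' ∈ Finset.range L, ∑ j : Fin M,
          Real.sqrt (‖θ l' j - θ' l' j‖ ^ 2 + ‖w l' j - w' l' j‖ ^ 2) := heq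
    _ ≤ (Real.exp A * Lp + 1) / ((M:ℝ) * (L:ℝ)) * ∑ l' ∈ Finset.range L, ∑ j : Fin M,
          Real.sqrt (‖θ l' j - θ' l' j‖ ^ 2 + ‖w l' j - w' l' j‖ ^ 2) := by
        refine mul_le_mul_of_nonneg_right ?_ hS0
        have hle : Real.exp A * Lp ≤ Real.exp A * Lp + 1 := by linarith
        exact (div_le_div_iff_of_pos_right hML).mpr hle
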